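/- arXiv:1201.1256 — 2 statements merged into one kernel-verified Lean document; each statement's English description precedes it below -/
import Mathlib

section
/- No distillation of negativity by positively represented projective measurement (bound states for magic state distillation): let m ≥ 1, with composite phase point operators B_𝐯 on m qudits defined entrywise by (B_𝐯) x y = ∏_i A_(𝐯 i) (x i) (y i). Let σ : Matrix ((ZMod d) × (Fin m → ZMod d)) ((ZMod d) × (Fin m → ZMod d)) ℂ be Hermitian with Re(trace((A_u ⊗ B_𝐯) * σ)) ≥ 0 for all u and 𝐯. Let P : Matrix (Fin m → ZMod d) (Fin m → ZMod d) ℂ be Hermitian with P * P = P and Re(trace(B_𝐯 * P)) ≥ 0 for all 𝐯. Define the (unnormalized) post-selected output state ρ_out : Matrix (ZMod d) (ZMod d) ℂ by ρ_out i j = Σ over k : Fin m → ZMod d of ((1 ⊗ P) * σ * (1 ⊗ P)) (i, k) (j, k) (the partial trace over the last m qudits). Then for every u ∈ ZMod d × ZMod d, Re(trace(A_u * ρ_out)) ≥ 0. -/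
open Matrix Complex

/-- ω = exp(2πi/d). -/
noncomputable def omegaC (d : ℕ) : ℂ := Complex.exp (2 * Real.pi * Complex.I / d)

/-- The clock matrix `Z`, with `Z x x = ω ^ x.val`. -/
noncomputable def Zmat (d : ℕ) : Matrix (ZMod d) (ZMod d) ℂ :=
  Matrix.diagonal (fun x => omegaC d ^ x.val)

/-- The shift matrix `X`, with `X x y = 1` iff `x = y + 1`. -/
noncomputable def Xmat (d : ℕ) : Matrix (ZMod d) (ZMod d) ℂ :=
  Matrix.of fun x y => if x = y + 1 then 1 else 0

/-- The Heisenberg–Weyl operator `T_a`. -/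
noncomputable def TW (d : ℕ) [NeZero d] (a : ZMod d × ZMod d) : Matrix (ZMod d) (ZMod d) ℂ :=
  omegaC d ^ ((-((2 : ZMod d)⁻¹ * a.1 * a.2)).val) • (Zmat d ^ a.1.val * Xmat d ^ a.2.val)

/-- The phase point operator at the origin, `A_0 = (1/d) • ∑ a, T_a`. -/
noncomputable def Apoint0 (d : ℕ) [NeZero d] : Matrix (ZMod d) (ZMod d) ℂ :=
  (1 / (d : ℂ)) • ∑ a : ZMod d × ZMod d, TW d a

/-- The phase point operator `A_u = T_u * A_0 * T_uᴴ`. -/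
noncomputable def Apoint (d : ℕ) [NeZero d] (u : ZMod d × ZMod d) : Matrix (ZMod d) (ZMod d) ℂ :=
  TW d u * Apoint0 d * (TW d u)ᴴ

namespace ND
variable (d : ℕ) [NeZero d]

noncomputable def zet (c : ZMod d) : ℂ := omegaC d ^ c.val

lemma omega_pow_d : omegaC d ^ d = 1 := by
  rw [omegaC, ← Complex.exp_nat_mul]
  have hd : (d : ℂ) ≠ 0 := Nat.cast_ne_zero.mpr (NeZero.ne d)
  have h : (d : ℂ) * (2 * Real.pi * Complex.I / d) = 2 * Real.pi * Complex.I := by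
    field_simp
  rw [h, Complex.exp_two_pi_mul_I]

lemma zet_natCast (n : ℕ) : zet d (n : ZMod d) = omegaC d ^ n := by
  conv_rhs => rw [← Nat.div_add_mod n d]
  rw [pow_add, pow_mul, omega_pow_d, one_pow, one_mul, zet, ZMod.val_natCast]

lemma zet_add (a b : ZMod d) : zet d (a + b) = zet d a * zet d b := by
  have h : a + b = ((a.val + b.val : ℕ) : ZMod d) := by
    push_cast [ZMod.natCast_zmod_val]
    ring
  rw [h, zet_natCast, pow_add, zet, zet]

lemma zet_zero : zet d 0 = 1 := by
  rw [zet, ZMod.val_zero, pow_zero]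

lemma zet_mul_neg (c : ZMod d) : zet d c * zet d (-c) = 1 := by
  rw [← zet_add, add_neg_cancel, zet_zero]

lemma zet_mul_val (a b : ZMod d) : zet d (a * b) = omegaC d ^ (a.val * b.val) := by
  have h : a * b = ((a.val * b.val : ℕ) : ZMod d) := by
    push_cast [ZMod.natCast_zmod_val]
    ring
  rw [h, zet_natCast]

lemma abs_omega : ‖omegaC d‖ = 1 := by
  have h : (2 * (Real.pi : ℂ) * Complex.I / d) = ((2 * Real.pi / d : ℝ) : ℂ) * Complex.I := by
    push_cast; ring
  rw [omegaC, h, Complex.norm_exp_ofReal_mul_I]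

lemma conj_zet (c : ZMod d) : (starRingEnd ℂ) (zet d c) = zet d (-c) := by
  have h1 : ‖zet d c‖ = 1 := by rw [zet, norm_pow, abs_omega, one_pow]
  rw [← Complex.inv_eq_conj h1]
  exact inv_eq_of_mul_eq_one_right (zet_mul_neg d c)

lemma sum_val (f : ℕ → ℂ) : ∑ x : ZMod d, f x.val = ∑ i ∈ Finset.range d, f i := by
  refine Finset.sum_nbij' (fun x => x.val) (fun i => (i : ZMod d)) ?_ ?_ ?_ ?_ ?_
  · exact fun x _ => Finset.mem_range.mpr x.val_lt
  · exact fun i _ => Finset.mem_univ _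
  · exact fun x _ => ZMod.natCast_zmod_val x
  · exact fun i hi => ZMod.val_cast_of_lt (Finset.mem_range.mp hi)
  · exact fun x _ => rfl

lemma zet_eq_one_iff (c : ZMod d) : zet d c = 1 ↔ c = 0 := by
  constructor
  · intro h
    have hprim := Complex.isPrimitiveRoot_exp d (NeZero.ne d)
    rw [zet] at h
    have hdvd : d ∣ c.val := (IsPrimitiveRoot.pow_eq_one_iff_dvd hprim c.val).mp h
    have hv : c.val = 0 := Nat.eq_zero_of_dvd_of_lt hdvd c.val_lt
    exact (ZMod.val_eq_zero c).mp hv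
  · rintro rfl; exact zet_zero d

lemma sum_zet (c : ZMod d) : ∑ x : ZMod d, zet d (c * x) = if c = 0 then (d : ℂ) else 0 := by
  have key : ∀ x : ZMod d, zet d (c * x) = zet d c ^ x.val := by
    intro x
    rw [zet_mul_val, pow_mul, zet]
  split_ifs with hc
  · subst hc
    simp only [zero_mul, zet_zero]
    simp [Finset.card_univ]
  · have h1 : zet d c ≠ 1 := fun h => hc ((zet_eq_one_iff d c).mp h)
    simp_rw [key]
    rw [sum_val d (fun k => zet d c ^ k), geom_sum_eq h1]
    have : zet d c ^ d = 1 := by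
      rw [zet, ← pow_mul, mul_comm, pow_mul, omega_pow_d, one_pow]
    rw [this, sub_self, zero_div]


noncomputable def Wmat (a : ZMod d × ZMod d) : Matrix (ZMod d) (ZMod d) ℂ :=
  Matrix.of fun x y => zet d (a.1 * x) * (if x = y + a.2 then 1 else 0)

lemma two_mul_inv (hodd : Odd d) : (2 : ZMod d) * 2⁻¹ = 1 := by
  apply ZMod.mul_inv_of_unit
  have : ((2 : ℕ) : ZMod d) = (2 : ZMod d) := by push_cast; ring
  rw [← this]
  exact (ZMod.isUnit_iff_coprime 2 d).mpr (Nat.coprime_two_left.mpr hodd)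

lemma Xpow_apply (n : ℕ) (x y : ZMod d) :
    (Xmat d ^ n) x y = if x = y + (n : ZMod d) then 1 else 0 := by
  induction n generalizing y with
  | zero => simp [Matrix.one_apply]
  | succ n ih =>
    rw [pow_succ, Matrix.mul_apply, Finset.sum_eq_single (y + 1)]
    · rw [ih]
      have h1 : (y + 1 : ZMod d) + (n : ZMod d) = y + ((n + 1 : ℕ) : ZMod d) := by
        push_cast; ring
      rw [h1]
      simp [Xmat]
    · intro z _ hz
      simp [Xmat, hz, Matrix.of_apply]
    · simp

lemma ZX_eq_W (a : ZMod d × ZMod d) :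
    Zmat d ^ a.1.val * Xmat d ^ a.2.val = Wmat d a := by
  ext x y
  rw [Zmat, Matrix.diagonal_pow, Matrix.diagonal_mul, Xpow_apply, Wmat]
  simp only [Matrix.of_apply, Pi.pow_apply]
  rw [zet_mul_val, ← pow_mul, ZMod.natCast_zmod_val, mul_comm x.val a.1.val]

lemma TW_eq (a : ZMod d × ZMod d) :
    TW d a = zet d (-((2 : ZMod d)⁻¹ * a.1 * a.2)) • Wmat d a := by
  rw [TW, ZX_eq_W]; rfl

lemma W_mul (u a : ZMod d × ZMod d) :
    Wmat d u * Wmat d a = zet d (-(a.1 * u.2)) • Wmat d (u + a) := by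
  ext x y
  rw [Matrix.mul_apply, Matrix.smul_apply, Finset.sum_eq_single (y + a.2)]
  · simp only [Wmat, Matrix.of_apply, if_pos rfl, mul_one, smul_eq_mul]
    by_cases hx : x = y + a.2 + u.2
    · have hcond : x = y + (u + a).2 := by rw [hx]; show _ = y + (u.2 + a.2); ring
      rw [if_pos hx, if_pos hcond, mul_one, mul_one]
      have hy : y + a.2 = x - u.2 := by rw [hx]; ring
      rw [hy, if_true, mul_one, ← zet_add, ← zet_add]
      congr 1
      show u.1 * x + a.1 * (x - u.2) = -(a.1 * u.2) + (u.1 + a.1) * x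
      ring
    · have hcond : ¬ x = y + (u + a).2 := by
        intro h; apply hx; rw [h]
        show y + (u.2 + a.2) = y + a.2 + u.2
        ring
      rw [if_neg hx, if_neg hcond]
      ring
  · intro z _ hz
    simp [Wmat, Matrix.of_apply, Ne.symm hz, hz]
  · simp

lemma W_conjT (a : ZMod d × ZMod d) :
    (Wmat d a)ᴴ = zet d (-(a.1 * a.2)) • Wmat d (-a) := by
  ext x y
  rw [Matrix.conjTranspose_apply, Matrix.smul_apply, smul_eq_mul]
  show (starRingEnd ℂ) (Wmat d a y x) = _
  simp only [Wmat, Matrix.of_apply, _root_.map_mul, conj_zet, apply_ite (starRingEnd ℂ),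
    _root_.map_one, _root_.map_zero]
  by_cases h : y = x + a.2
  · have hcond : x = y + (-a).2 := by rw [h]; show _ = x + a.2 + (-a.2); ring
    rw [if_pos h, if_pos hcond, mul_one, mul_one, h, ← zet_add]
    congr 1
    show -(a.1 * (x + a.2)) = -(a.1 * a.2) + -a.1 * x
    ring
  · have hcond : ¬ x = y + (-a).2 := by
      intro hh; apply h; rw [hh]
      show y = y + (-a.2) + a.2
      ring
    rw [if_neg h, if_neg hcond, mul_zero, mul_zero, mul_zero]

lemma W_zero : Wmat d 0 = 1 := by
  ext x y
  simp [Wmat, Matrix.one_apply, zet_zero]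

lemma T_zero : TW d 0 = 1 := by
  rw [TW_eq]
  show zet d (-((2 : ZMod d)⁻¹ * 0 * 0)) • Wmat d 0 = 1
  rw [W_zero]
  simp [zet_zero]

lemma T_mul (hodd : Odd d) (u a : ZMod d × ZMod d) :
    TW d u * TW d a = zet d ((2 : ZMod d)⁻¹ * (u.1 * a.2 - a.1 * u.2)) • TW d (u + a) := by
  have h2 : (2 : ZMod d) * 2⁻¹ = 1 := two_mul_inv d hodd
  rw [TW_eq, TW_eq, TW_eq, Matrix.smul_mul, Matrix.mul_smul, W_mul, smul_smul, smul_smul,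
    smul_smul]
  congr 1
  rw [← zet_add, ← zet_add, ← zet_add]
  congr 1
  simp only [Prod.fst_add, Prod.snd_add]
  linear_combination (a.1 * u.2) * h2

lemma T_conjT (hodd : Odd d) (a : ZMod d × ZMod d) : (TW d a)ᴴ = TW d (-a) := by
  have h2 : (2 : ZMod d) * 2⁻¹ = 1 := two_mul_inv d hodd
  rw [TW_eq, Matrix.conjTranspose_smul, W_conjT, smul_smul, TW_eq]
  congr 1
  rw [RCLike.star_def, conj_zet, ← zet_add]
  congr 1
  simp only [Prod.fst_neg, Prod.snd_neg]
  linear_combination (a.1 * a.2) * h2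

lemma T_conj_action (hodd : Odd d) (u a : ZMod d × ZMod d) :
    TW d u * (TW d a * (TW d u)ᴴ) = zet d (u.1 * a.2 - u.2 * a.1) • TW d a := by
  have h2 : (2 : ZMod d) * 2⁻¹ = 1 := two_mul_inv d hodd
  rw [T_conjT d hodd, T_mul d hodd a (-u), Matrix.mul_smul, T_mul d hodd u (a + -u), smul_smul]
  have hsum : u + (a + -u) = a := by ring
  rw [hsum, ← zet_add]
  congr 1
  congr 1
  simp only [Prod.fst_add, Prod.snd_add, Prod.fst_neg, Prod.snd_neg]
  linear_combination (u.1 * a.2 - u.2 * a.1) * h2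

lemma Apoint_eq (hodd : Odd d) (u : ZMod d × ZMod d) :
    Apoint d u = (1 / (d : ℂ)) • ∑ a : ZMod d × ZMod d,
      zet d (u.1 * a.2 - u.2 * a.1) • TW d a := by
  rw [Apoint, Apoint0, Matrix.mul_smul, Matrix.smul_mul]
  congr 1
  rw [Matrix.mul_sum, Matrix.sum_mul]
  refine Finset.sum_congr rfl fun a _ => ?_
  rw [mul_assoc, T_conj_action d hodd]

lemma Apoint_apply (hodd : Odd d) (u : ZMod d × ZMod d) (x y : ZMod d) :
    Apoint d u x y = (1 / (d : ℂ)) * ∑ a : ZMod d × ZMod d,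
      zet d (u.1 * a.2 - u.2 * a.1) * TW d a x y := by
  rw [Apoint_eq d hodd]
  simp [Matrix.sum_apply]

lemma sum_T_mul_conj (x y p q : ZMod d) :
    ∑ a : ZMod d × ZMod d, TW d a x y * (starRingEnd ℂ) (TW d a p q) =
      if x = p ∧ y = q then (d : ℂ) else 0 := by
  have hterm : ∀ a : ZMod d × ZMod d, TW d a x y * (starRingEnd ℂ) (TW d a p q)
      = zet d ((x - p) * a.1) *
        ((if x = y + a.2 then 1 else 0) * (if p = q + a.2 then 1 else 0)) := by
    intro a
    rw [TW_eq]
    simp only [Matrix.smul_apply, Wmat, Matrix.of_apply, smul_eq_mul, _root_.map_mul, conj_zet,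
      apply_ite (starRingEnd ℂ), _root_.map_one, _root_.map_zero]
    have hshuffle : ∀ (α β γ δ i j : ℂ),
        (α * (β * i)) * (γ * (δ * j)) = (α * γ) * ((β * δ) * (i * j)) := by intros; ring
    rw [hshuffle, ← zet_add, ← zet_add, add_neg_cancel, zet_zero, one_mul]
    congr 2
    ring
  simp_rw [hterm]
  rw [Fintype.sum_prod_type]
  have hswap : ∀ a1 : ZMod d, ∑ a2 : ZMod d, zet d ((x - p) * a1) *
      ((if x = y + a2 then (1:ℂ) else 0) * (if p = q + a2 then 1 else 0))
      = zet d ((x - p) * a1) * (if p = q + (x - y) then 1 else 0) := by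
    intro a1
    rw [← Finset.mul_sum]
    congr 1
    rw [Finset.sum_eq_single (x - y)]
    · have h1 : x = y + (x - y) := by ring
      rw [if_pos h1, one_mul]
    · intro z _ hz
      have h2 : ¬ x = y + z := by
        intro h; apply hz; rw [h]; ring
      rw [if_neg h2, zero_mul]
    · simp
  simp_rw [hswap]
  rw [← Finset.sum_mul, sum_zet]
  by_cases h1 : x = p
  · subst h1
    by_cases h2 : y = q
    · subst h2
      have hc : x = y + (x - y) := by ring
      simp only [sub_self]
      rw [if_pos hc]; simp
    · have hc : ¬ x = q + (x - y) := fun h => h2 (by linear_combination h)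
      simp only [sub_self]
      rw [if_neg hc]; simp [h2]
  · rw [if_neg (sub_ne_zero.mpr h1), zero_mul, if_neg (by tauto)]

lemma sum_chi (c : ZMod d × ZMod d) :
    ∑ u : ZMod d × ZMod d, zet d (u.1 * c.2 - u.2 * c.1)
      = if c = 0 then (d : ℂ) * d else 0 := by
  have hterm : ∀ u : ZMod d × ZMod d, zet d (u.1 * c.2 - u.2 * c.1)
      = zet d (c.2 * u.1) * zet d ((-c.1) * u.2) := by
    intro u; rw [← zet_add]; congr 1; ring
  simp_rw [hterm]
  rw [Fintype.sum_prod_type]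
  have hfac : ∀ x1 : ZMod d, ∑ x2 : ZMod d, zet d (c.2 * (x1, x2).1) * zet d (-c.1 * (x1, x2).2)
      = zet d (c.2 * x1) * ∑ x2 : ZMod d, zet d (-c.1 * x2) := fun x1 => by
    show ∑ x2 : ZMod d, zet d (c.2 * x1) * zet d (-c.1 * x2) = _
    rw [← Finset.mul_sum]
  simp_rw [hfac]
  rw [← Finset.sum_mul, sum_zet, sum_zet]
  by_cases h1 : c.1 = 0 <;> by_cases h2 : c.2 = 0 <;>
    simp [h1, h2, Prod.ext_iff, neg_eq_zero]

lemma sum_A_mul_conj (hodd : Odd d) (x y p q : ZMod d) :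
    ∑ u : ZMod d × ZMod d, Apoint d u x y * (starRingEnd ℂ) (Apoint d u p q)
      = if x = p ∧ y = q then (d : ℂ) else 0 := by
  have hd0 : (d : ℂ) ≠ 0 := Nat.cast_ne_zero.mpr (NeZero.ne d)
  have expand : ∀ u : ZMod d × ZMod d, Apoint d u x y * (starRingEnd ℂ) (Apoint d u p q)
      = (1 / (d:ℂ)) * (1 / (d:ℂ)) * ∑ a : ZMod d × ZMod d, ∑ b : ZMod d × ZMod d,
          zet d (u.1 * (a - b).2 - u.2 * (a - b).1) *
            (TW d a x y * (starRingEnd ℂ) (TW d b p q)) := by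
    intro u
    rw [Apoint_apply d hodd, Apoint_apply d hodd, _root_.map_mul, map_sum]
    have hc : (starRingEnd ℂ) (1 / (d:ℂ)) = 1 / (d:ℂ) := by
      simp
    rw [hc]
    rw [show ∀ (α β γ δ : ℂ), α * β * (γ * δ) = α * γ * (β * δ) from fun _ _ _ _ => by ring]
    congr 1
    rw [Finset.sum_mul_sum]
    refine Finset.sum_congr rfl fun a _ => Finset.sum_congr rfl fun b _ => ?_
    rw [_root_.map_mul, conj_zet]
    rw [show ∀ (α t β s : ℂ), α * t * (β * s) = (α * β) * (t * s) from fun _ _ _ _ => by ring]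
    congr 2
    rw [← zet_add]
    congr 1
    simp only [Prod.fst_sub, Prod.snd_sub]
    ring
  simp_rw [expand]
  rw [← Finset.mul_sum]
  have hS : (∑ u : ZMod d × ZMod d, ∑ a : ZMod d × ZMod d, ∑ b : ZMod d × ZMod d,
        zet d (u.1 * (a - b).2 - u.2 * (a - b).1) * (TW d a x y * (starRingEnd ℂ) (TW d b p q)))
      = (d:ℂ) * d * ∑ a : ZMod d × ZMod d, TW d a x y * (starRingEnd ℂ) (TW d a p q) := by
    rw [Finset.sum_comm]
    calc ∑ a : ZMod d × ZMod d, ∑ u : ZMod d × ZMod d, ∑ b : ZMod d × ZMod d,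
          zet d (u.1 * (a - b).2 - u.2 * (a - b).1) * (TW d a x y * (starRingEnd ℂ) (TW d b p q))
        = ∑ a : ZMod d × ZMod d, ∑ b : ZMod d × ZMod d, ∑ u : ZMod d × ZMod d,
          zet d (u.1 * (a - b).2 - u.2 * (a - b).1) * (TW d a x y * (starRingEnd ℂ) (TW d b p q)) :=
          Finset.sum_congr rfl fun a _ => Finset.sum_comm
      _ = ∑ a : ZMod d × ZMod d, ∑ b : ZMod d × ZMod d,
          (if a - b = 0 then (d:ℂ) * d else 0) * (TW d a x y * (starRingEnd ℂ) (TW d b p q)) := by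
          refine Finset.sum_congr rfl fun a _ => Finset.sum_congr rfl fun b _ => ?_
          rw [← Finset.sum_mul, sum_chi]
      _ = ∑ a : ZMod d × ZMod d, (d:ℂ) * d * (TW d a x y * (starRingEnd ℂ) (TW d a p q)) := by
          refine Finset.sum_congr rfl fun a _ => ?_
          rw [Finset.sum_eq_single a]
          · rw [sub_self, if_pos rfl]
          · intro b _ hb
            rw [if_neg (sub_ne_zero.mpr (Ne.symm hb)), zero_mul]
          · simp
      _ = (d:ℂ) * d * ∑ a : ZMod d × ZMod d, TW d a x y * (starRingEnd ℂ) (TW d a p q) := by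
          rw [Finset.mul_sum]
  rw [hS, sum_T_mul_conj]
  have hfin : ∀ t : ℂ, 1 / (d:ℂ) * (1 / (d:ℂ)) * ((d:ℂ) * d * t) = t := by
    intro t; field_simp
  exact hfin _

lemma A0_herm (hodd : Odd d) : (Apoint0 d)ᴴ = Apoint0 d := by
  rw [Apoint0, Matrix.conjTranspose_smul, Matrix.conjTranspose_sum]
  congr 1
  · simp
  · simp_rw [T_conjT d hodd]
    exact Fintype.sum_equiv (Equiv.neg _) _ _ fun a => rfl

lemma A_herm (hodd : Odd d) (u : ZMod d × ZMod d) : (Apoint d u)ᴴ = Apoint d u := by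
  rw [Apoint, Matrix.conjTranspose_mul, Matrix.conjTranspose_mul,
    Matrix.conjTranspose_conjTranspose, A0_herm d hodd, Matrix.mul_assoc]

lemma A_conj_entry (hodd : Odd d) (u : ZMod d × ZMod d) (x y : ZMod d) :
    (starRingEnd ℂ) (Apoint d u x y) = Apoint d u y x := by
  have h := congrFun (congrFun (A_herm d hodd u) y) x
  rw [Matrix.conjTranspose_apply] at h
  exact h

end ND

open Kronecker

/-- Composite phase point operator on `m` qudits. -/
noncomputable def Bcomp (d : ℕ) [NeZero d] (m : ℕ) (v : Fin m → ZMod d × ZMod d) :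
    Matrix (Fin m → ZMod d) (Fin m → ZMod d) ℂ :=
  Matrix.of fun x y => ∏ i : Fin m, Apoint d (v i) (x i) (y i)

namespace ND
variable (d : ℕ) [NeZero d] (m : ℕ)

lemma B_conj_entry (hodd : Odd d) (v : Fin m → ZMod d × ZMod d) (p q : Fin m → ZMod d) :
    (starRingEnd ℂ) (Bcomp d m v p q) = Bcomp d m v q p := by
  simp only [Bcomp, Matrix.of_apply, map_prod]
  exact Finset.prod_congr rfl fun i _ => A_conj_entry d hodd (v i) (p i) (q i)

lemma B_herm (hodd : Odd d) (v : Fin m → ZMod d × ZMod d) :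
    (Bcomp d m v)ᴴ = Bcomp d m v := by
  ext p q
  rw [Matrix.conjTranspose_apply]
  exact B_conj_entry d m hodd v q p

lemma sum_B_mul_conj (hodd : Odd d) (x y p q : Fin m → ZMod d) :
    ∑ v : Fin m → ZMod d × ZMod d, Bcomp d m v x y * (starRingEnd ℂ) (Bcomp d m v p q)
      = if x = p ∧ y = q then (d : ℂ) ^ m else 0 := by
  have hterm : ∀ v : Fin m → ZMod d × ZMod d,
      Bcomp d m v x y * (starRingEnd ℂ) (Bcomp d m v p q)
      = ∏ i : Fin m, (Apoint d (v i) (x i) (y i) * (starRingEnd ℂ) (Apoint d (v i) (p i) (q i))) := by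
    intro v
    simp only [Bcomp, Matrix.of_apply, map_prod]
    rw [← Finset.prod_mul_distrib]
  simp_rw [hterm]
  rw [← Fintype.piFinset_univ, ← Finset.prod_univ_sum (fun _ => Finset.univ)
    (fun i (u : ZMod d × ZMod d) => Apoint d u (x i) (y i) * (starRingEnd ℂ) (Apoint d u (p i) (q i)))]
  simp_rw [sum_A_mul_conj d hodd]
  by_cases h : x = p ∧ y = q
  · rw [if_pos h]
    have hone : ∀ i : Fin m, (if x i = p i ∧ y i = q i then (d:ℂ) else 0) = (d:ℂ) :=
      fun i => if_pos ⟨congrFun h.1 i, congrFun h.2 i⟩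
    rw [Finset.prod_congr rfl (fun i _ => hone i), Finset.prod_const, Finset.card_univ,
      Fintype.card_fin]
  · rw [if_neg h]
    have hex : ∃ i, ¬(x i = p i ∧ y i = q i) := by
      by_contra hall
      push_neg at hall
      refine h ⟨funext fun i => ?_, funext fun i => ?_⟩
      · exact (hall i).1
      · exact (hall i).2
    obtain ⟨i, hi⟩ := hex
    exact Finset.prod_eq_zero (Finset.mem_univ i) (if_neg hi)

lemma P_expand (hodd : Odd d) (P : Matrix (Fin m → ZMod d) (Fin m → ZMod d) ℂ)
    (x y : Fin m → ZMod d) :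
    ∑ v : Fin m → ZMod d × ZMod d, (Bcomp d m v * P).trace * Bcomp d m v x y
      = (d:ℂ)^m * P x y := by
  have htr : ∀ v : Fin m → ZMod d × ZMod d, (Bcomp d m v * P).trace
      = ∑ p, ∑ q, Bcomp d m v p q * P q p := by
    intro v
    simp [Matrix.trace, Matrix.diag, Matrix.mul_apply]
  simp_rw [htr, Finset.sum_mul]
  rw [Finset.sum_comm]
  have hinner : ∀ p : Fin m → ZMod d,
      ∑ v : Fin m → ZMod d × ZMod d, ∑ q, (Bcomp d m v p q * P q p) * Bcomp d m v x y
      = ∑ q, P q p * (if x = q ∧ y = p then (d:ℂ)^m else 0) := by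
    intro p
    rw [Finset.sum_comm]
    refine Finset.sum_congr rfl fun q _ => ?_
    have hv : ∀ v, (Bcomp d m v p q * P q p) * Bcomp d m v x y
        = P q p * (Bcomp d m v x y * (starRingEnd ℂ) (Bcomp d m v q p)) := by
      intro v
      rw [B_conj_entry d m hodd v q p]
      ring
    simp_rw [hv]
    rw [← Finset.mul_sum, sum_B_mul_conj d m hodd]
  simp_rw [hinner]
  rw [Finset.sum_eq_single y]
  · rw [Finset.sum_eq_single x]
    · rw [if_pos ⟨rfl, rfl⟩]; ring
    · intro q _ hq
      rw [if_neg (fun hc => hq hc.1.symm), mul_zero]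
    · simp
  · intro p _ hp
    exact Finset.sum_eq_zero fun q _ => by rw [if_neg (fun hc => hp hc.2.symm), mul_zero]
  · simp

lemma trace_kron (A : Matrix (ZMod d) (ZMod d) ℂ)
    (Q : Matrix (Fin m → ZMod d) (Fin m → ZMod d) ℂ)
    (σ : Matrix (ZMod d × (Fin m → ZMod d)) (ZMod d × (Fin m → ZMod d)) ℂ) :
    ((A ⊗ₖ Q) * σ).trace = ∑ x : ZMod d × (Fin m → ZMod d), ∑ z : ZMod d × (Fin m → ZMod d),
      A x.1 z.1 * Q x.2 z.2 * σ z x := by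
  simp [Matrix.trace, Matrix.diag, Matrix.mul_apply, Matrix.kroneckerMap_apply]

lemma trace_mul_ptrace (A : Matrix (ZMod d) (ZMod d) ℂ)
    (M : Matrix (ZMod d × (Fin m → ZMod d)) (ZMod d × (Fin m → ZMod d)) ℂ) :
    (A * Matrix.of (fun i j => ∑ k : Fin m → ZMod d, M (i, k) (j, k))).trace
      = ((A ⊗ₖ (1 : Matrix (Fin m → ZMod d) (Fin m → ZMod d) ℂ)) * M).trace := by
  simp only [Matrix.trace, Matrix.diag, Matrix.mul_apply, Matrix.of_apply,
    Matrix.kroneckerMap_apply, Matrix.one_apply]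
  rw [Fintype.sum_prod_type]
  simp_rw [Fintype.sum_prod_type]
  simp only [mul_ite, ite_mul, mul_one, mul_zero, zero_mul, one_mul,
    Finset.sum_ite_eq, Finset.sum_ite_eq', Finset.mem_univ, if_true, Finset.mul_sum]
  refine Finset.sum_congr rfl fun i _ => ?_
  rw [Finset.sum_comm]

end ND

/-- No distillation of negativity by a positively represented projective measurement. -/
theorem no_distillation_of_negativity (d : ℕ) [NeZero d]
    (hodd : Odd d) (hd : 1 < d) (m : ℕ) (hm : 1 ≤ m)
    (σ : Matrix (ZMod d × (Fin m → ZMod d)) (ZMod d × (Fin m → ZMod d)) ℂ)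
    (hσH : σᴴ = σ)
    (hσpos : ∀ (u : ZMod d × ZMod d) (v : Fin m → ZMod d × ZMod d),
        0 ≤ (((Apoint d u ⊗ₖ Bcomp d m v) * σ).trace).re)
    (P : Matrix (Fin m → ZMod d) (Fin m → ZMod d) ℂ) (hPH : Pᴴ = P) (hPP : P * P = P)
    (hPpos : ∀ v : Fin m → ZMod d × ZMod d, 0 ≤ ((Bcomp d m v * P).trace).re)
    (ρout : Matrix (ZMod d) (ZMod d) ℂ)
    (hρout : ρout = Matrix.of fun i j =>
        ∑ k : Fin m → ZMod d,
          (((1 : Matrix (ZMod d) (ZMod d) ℂ) ⊗ₖ P) * σ *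
            ((1 : Matrix (ZMod d) (ZMod d) ℂ) ⊗ₖ P)) (i, k) (j, k))
    (u : ZMod d × ZMod d) :
    0 ≤ ((Apoint d u * ρout).trace).re := by
  classical
  have hdm0 : ((d:ℂ)^m) ≠ 0 := pow_ne_zero m (Nat.cast_ne_zero.mpr (NeZero.ne d))
  -- Step 1: trace(A_u ρout) = trace((A_u ⊗ P) σ)
  have h1 : (Apoint d u * ρout).trace = ((Apoint d u ⊗ₖ P) * σ).trace := by
    rw [hρout, ND.trace_mul_ptrace d m]
    have e1 : (Apoint d u ⊗ₖ (1 : Matrix (Fin m → ZMod d) (Fin m → ZMod d) ℂ)) *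
        (((1 : Matrix (ZMod d) (ZMod d) ℂ) ⊗ₖ P) * σ * ((1 : Matrix (ZMod d) (ZMod d) ℂ) ⊗ₖ P))
        = ((Apoint d u ⊗ₖ P) * σ) * ((1 : Matrix (ZMod d) (ZMod d) ℂ) ⊗ₖ P) := by
      rw [← Matrix.mul_assoc, ← Matrix.mul_assoc, ← Matrix.mul_kronecker_mul,
        Matrix.mul_one, Matrix.one_mul]
    rw [e1, Matrix.trace_mul_comm, ← Matrix.mul_assoc, ← Matrix.mul_kronecker_mul,
      Matrix.one_mul, hPP]
  -- Step 2: expand P in the B basis inside the trace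
  have lin : ∀ Q : Matrix (Fin m → ZMod d) (Fin m → ZMod d) ℂ,
      ((Apoint d u ⊗ₖ Q) * σ).trace = ∑ x : ZMod d × (Fin m → ZMod d),
        ∑ z : ZMod d × (Fin m → ZMod d), Apoint d u x.1 z.1 * Q x.2 z.2 * σ z x :=
    fun Q => ND.trace_kron d m (Apoint d u) Q σ
  set c : (Fin m → ZMod d × ZMod d) → ℂ := fun v => (Bcomp d m v * P).trace with hc
  have hPpt : ∀ (s t : Fin m → ZMod d),
      P s t = ((d:ℂ)^m)⁻¹ * ∑ v : Fin m → ZMod d × ZMod d, c v * Bcomp d m v s t := by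
    intro s t
    have h0 := ND.P_expand d m hodd P s t
    rw [show (∑ v : Fin m → ZMod d × ZMod d, c v * Bcomp d m v s t) = (d:ℂ)^m * P s t from h0,
      inv_mul_cancel_left₀ hdm0]
  have distrib : ∀ (a s : ℂ) (f : (Fin m → ZMod d × ZMod d) → ℂ),
      a * (((d:ℂ)^m)⁻¹ * ∑ v : Fin m → ZMod d × ZMod d, f v) * s
        = ((d:ℂ)^m)⁻¹ * ∑ v : Fin m → ZMod d × ZMod d, a * f v * s := by
    intro a s f
    simp only [Finset.mul_sum, Finset.sum_mul]
    exact Finset.sum_congr rfl fun v _ => by ring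
  have key : ((Apoint d u ⊗ₖ P) * σ).trace
      = ((d:ℂ)^m)⁻¹ * ∑ v : Fin m → ZMod d × ZMod d,
          c v * ((Apoint d u ⊗ₖ Bcomp d m v) * σ).trace := by
    simp_rw [lin, hPpt, distrib]
    simp only [← Finset.mul_sum]
    congr 1
    calc ∑ x : ZMod d × (Fin m → ZMod d), ∑ z : ZMod d × (Fin m → ZMod d),
          ∑ v : Fin m → ZMod d × ZMod d,
          Apoint d u x.1 z.1 * (c v * Bcomp d m v x.2 z.2) * σ z x
        = ∑ x : ZMod d × (Fin m → ZMod d), ∑ v : Fin m → ZMod d × ZMod d,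
          ∑ z : ZMod d × (Fin m → ZMod d),
          Apoint d u x.1 z.1 * (c v * Bcomp d m v x.2 z.2) * σ z x :=
          Finset.sum_congr rfl fun x _ => Finset.sum_comm
      _ = ∑ v : Fin m → ZMod d × ZMod d, ∑ x : ZMod d × (Fin m → ZMod d),
          ∑ z : ZMod d × (Fin m → ZMod d),
          Apoint d u x.1 z.1 * (c v * Bcomp d m v x.2 z.2) * σ z x := Finset.sum_comm
      _ = ∑ v : Fin m → ZMod d × ZMod d,
          c v * ∑ x : ZMod d × (Fin m → ZMod d), ∑ z : ZMod d × (Fin m → ZMod d),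
          Apoint d u x.1 z.1 * Bcomp d m v x.2 z.2 * σ z x := by
          refine Finset.sum_congr rfl fun v _ => ?_
          simp only [Finset.mul_sum]
          exact Finset.sum_congr rfl fun x _ => Finset.sum_congr rfl fun z _ => by ring
  have hreal : ∀ v : Fin m → ZMod d × ZMod d, (c v).im = 0 := by
    intro v
    have hstar : (starRingEnd ℂ) (c v) = c v := by
      have h2 : ((Bcomp d m v * P)ᴴ).trace = star (Bcomp d m v * P).trace :=
        Matrix.trace_conjTranspose _
      rw [Matrix.conjTranspose_mul, hPH, ND.B_herm d m hodd, Matrix.trace_mul_comm] at h2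
      exact h2.symm
    exact Complex.conj_eq_iff_im.mp hstar
  rw [h1, key]
  have hcast : ((d:ℂ)^m)⁻¹ = ((((d:ℝ)^m)⁻¹ : ℝ) : ℂ) := by push_cast; ring
  rw [hcast, Complex.re_ofReal_mul]
  apply mul_nonneg
  · positivity
  · rw [Complex.re_sum]
    apply Finset.sum_nonneg
    intro v _
    rw [Complex.mul_re, hreal v, zero_mul, sub_zero]
    exact mul_nonneg (hPpos v) (hσpos u v)
end

section
/- The phase point operators define facets of the stabilizer polytope: assume additionally that d is an odd prime. For every u ∈ ZMod d × ZMod d there exists a family of d² − 1 matrices P_i : Matrix (ZMod d) (ZMod d) ℂ (i ranging over Fin (d² − 1)) such that (i) each P_i is a rank-one projector, i.e. P_i = v_i v_iᴴ for some vector v_i : ZMod d → ℂ with Σ_x ‖v_i x‖² = 1; (ii) each P_i is positively represented: Re(trace(A_w * P_i)) ≥ 0 for all w ∈ ZMod d × ZMod d; (iii) trace(A_u * P_i) = 0 for all i; and (iv) the family (P_i) is linearly independent over ℝ in the ℝ-vector space Matrix (ZMod d) (ZMod d) ℂ. -/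
open Matrix Complex Finset
set_option linter.unusedSectionVars false
set_option maxHeartbeats 1000000

namespace Facets
variable (d : ℕ) [NeZero d]

lemma omega_pow_d : omegaC d ^ d = 1 := (Complex.isPrimitiveRoot_exp d (NeZero.ne d)).pow_eq_one

lemma omega_abs : ‖omegaC d‖ = 1 := by
  have : (2 * Real.pi * Complex.I / d) = ((2 * Real.pi / d : ℝ) : ℂ) * Complex.I := by
    push_cast; ring
  rw [omegaC, this, Complex.norm_exp_ofReal_mul_I]

noncomputable def zeta (x : ZMod d) : ℂ := omegaC d ^ x.val

lemma omega_pow_mod (n : ℕ) : omegaC d ^ (n % d) = omegaC d ^ n := by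
  conv_rhs => rw [← Nat.div_add_mod n d]
  rw [pow_add, pow_mul, omega_pow_d, one_pow, one_mul]

lemma zeta_natCast (n : ℕ) : zeta d (n : ZMod d) = omegaC d ^ n := by
  rw [zeta, ZMod.val_natCast, omega_pow_mod]

lemma zeta_add (x y : ZMod d) : zeta d (x + y) = zeta d x * zeta d y := by
  have : ((x.val + y.val : ℕ) : ZMod d) = x + y := by
    push_cast; simp [ZMod.natCast_val, ZMod.cast_id]
  rw [← this, zeta_natCast, pow_add, zeta, zeta]

lemma zeta_zero : zeta d 0 = 1 := by simp [zeta]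

lemma zeta_abs (x : ZMod d) : ‖zeta d x‖ = 1 := by
  simp [zeta, map_pow, omega_abs]

lemma zeta_mul_neg (x : ZMod d) : zeta d x * zeta d (-x) = 1 := by
  rw [← zeta_add]; simp [zeta_zero]

lemma zeta_conj (x : ZMod d) : (starRingEnd ℂ) (zeta d x) = zeta d (-x) := by
  have h1 : zeta d x * (starRingEnd ℂ) (zeta d x) = 1 := by
    rw [Complex.mul_conj]; norm_cast
    rw [← Complex.sq_norm]; simp [zeta_abs]
  have hne : zeta d x ≠ 0 := by
    intro h; rw [h] at h1; simp at h1
  exact mul_left_cancel₀ hne (h1.trans (zeta_mul_neg d x).symm)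

lemma zeta_sum_eq_zero (hd : 1 < d) : ∑ x : ZMod d, zeta d x = 0 := by
  have h := (Complex.isPrimitiveRoot_exp d (NeZero.ne d)).geom_sum_eq_zero hd
  rw [← h]
  exact Finset.sum_nbij' (fun x => x.val) (fun i => (i : ZMod d))
    (by intro x _; simpa using x.val_lt) (by intros; simp)
    (by intro x _; simp [ZMod.natCast_val, ZMod.cast_id])
    (by intro i hi; simp at hi; simp [ZMod.val_natCast, Nat.mod_eq_of_lt hi])
    (by intros; rfl)

lemma char_sum (hp : d.Prime) (a : ZMod d) :
    ∑ x : ZMod d, zeta d (a * x) = if a = 0 then (d : ℂ) else 0 := by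
  haveI := Fact.mk hp
  split_ifs with h
  · simp [h, zeta_zero]
  · rw [← zeta_sum_eq_zero d hp.one_lt]
    exact Fintype.sum_bijective (fun x => a * x)
      (mulLeft_bijective₀ a h) _ _ (fun x => rfl)

lemma Xmat_pow (n : ℕ) (j k : ZMod d) :
    (Xmat d ^ n) j k = if j = k + (n : ZMod d) then 1 else 0 := by
  induction n generalizing j k with
  | zero => simp [Matrix.one_apply]
  | succ n ih =>
    rw [pow_succ, Matrix.mul_apply]
    have : ∀ m : ZMod d, (Xmat d ^ n) j m * (Xmat d) m k
        = if m = k + 1 then (Xmat d ^ n) j m else 0 := by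
      intro m; rw [Xmat]; by_cases h : m = k + 1 <;> simp [Matrix.of_apply, h]
    simp_rw [this, Finset.sum_ite_eq' Finset.univ (k+1), if_pos (Finset.mem_univ _), ih]
    push_cast
    ring_nf

lemma Zmat_pow (n : ℕ) (j k : ZMod d) :
    (Zmat d ^ n) j k = if j = k then zeta d ((n : ZMod d) * j) else 0 := by
  rw [Zmat, Matrix.diagonal_pow, Matrix.diagonal_apply]
  congr 1
  rw [Pi.pow_apply, ← pow_mul, mul_comm j.val n, ← zeta_natCast d (n * j.val)]
  congr 1
  push_cast
  rw [ZMod.natCast_val, ZMod.cast_id]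

lemma TW_apply (a : ZMod d × ZMod d) (j k : ZMod d) :
    TW d a j k = if j = k + a.2 then zeta d (a.1 * j - (2 : ZMod d)⁻¹ * a.1 * a.2) else 0 := by
  rw [TW, Matrix.smul_apply, Matrix.mul_apply]
  simp_rw [Zmat_pow, ite_mul, zero_mul]
  rw [Finset.sum_ite_eq Finset.univ j, if_pos (Finset.mem_univ _)]
  rw [Xmat_pow]
  have h1 : ((a.1.val : ZMod d)) = a.1 := by rw [ZMod.natCast_val, ZMod.cast_id]
  have h2 : ((a.2.val : ZMod d)) = a.2 := by rw [ZMod.natCast_val, ZMod.cast_id]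
  rw [h1, h2]
  by_cases h : j = k + a.2
  · rw [if_pos h, if_pos h, mul_one, smul_eq_mul, ← zeta]
    rw [← zeta_add]
    congr 1
    ring_nf
  · rw [if_neg h, if_neg h, mul_zero, smul_zero]

lemma two_ne_zero' (hodd : Odd d) (hp : d.Prime) : (2 : ZMod d) ≠ 0 := by
  intro h
  have : ((2 : ℕ) : ZMod d) = 0 := by push_cast; exact h
  rw [ZMod.natCast_eq_zero_iff] at this
  have h2 := Nat.le_of_dvd (by norm_num) this
  have h3 := hp.two_le
  interval_cases d
  · exact (Nat.not_odd_iff_even.mpr (by norm_num)) hodd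

lemma zeta_star (x : ZMod d) : star (zeta d x) = zeta d (-x) := zeta_conj d x

lemma Apoint0_apply (hodd : Odd d) (hp : d.Prime) (j k : ZMod d) :
    Apoint0 d j k = if j + k = 0 then 1 else 0 := by
  haveI := Fact.mk hp
  have h2 : (2 : ZMod d) ≠ 0 := two_ne_zero' d hodd hp
  rw [Apoint0, Matrix.smul_apply, Matrix.sum_apply]
  rw [Fintype.sum_prod_type]
  have step1 : ∀ a1 : ZMod d, ∑ a2 : ZMod d, TW d (a1, a2) j k
      = zeta d (a1 * j - (2:ZMod d)⁻¹ * a1 * (j - k)) := by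
    intro a1
    have : ∀ a2 : ZMod d, TW d (a1, a2) j k
        = if a2 = j - k then zeta d (a1 * j - (2:ZMod d)⁻¹ * a1 * a2) else 0 := by
      intro a2
      rw [TW_apply]
      by_cases h : a2 = j - k
      · rw [if_pos (by rw [h]; ring), if_pos h]
      · rw [if_neg (fun hc => h (by linear_combination -hc)), if_neg h]
    simp_rw [this]
    rw [Finset.sum_ite_eq' Finset.univ (j - k), if_pos (Finset.mem_univ _)]
  simp_rw [step1]
  have key : ∀ a1 : ZMod d, a1 * j - (2:ZMod d)⁻¹ * a1 * (j - k)
      = ((2:ZMod d)⁻¹ * (j + k)) * a1 := by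
    intro a1
    field_simp
    ring
  simp_rw [key]
  rw [char_sum d hp]
  have hinv : (2:ZMod d)⁻¹ ≠ 0 := inv_ne_zero h2
  have hiff : ((2:ZMod d)⁻¹ * (j + k) = 0) ↔ (j + k = 0) := by
    constructor
    · intro h; rcases mul_eq_zero.mp h with h | h
      · exact absurd h hinv
      · exact h
    · intro h; rw [h, mul_zero]
  by_cases h : j + k = 0
  · rw [if_pos (hiff.mpr h), if_pos h, smul_eq_mul]
    rw [one_div, inv_mul_cancel₀]
    exact_mod_cast Nat.cast_ne_zero.mpr (NeZero.ne d)
  · rw [if_neg (fun hc => h (hiff.mp hc)), if_neg h, smul_zero]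

lemma Apoint_apply (hodd : Odd d) (hp : d.Prime) (u : ZMod d × ZMod d) (j k : ZMod d) :
    Apoint d u j k = if j + k = 2 * u.2 then zeta d (u.1 * (j - k)) else 0 := by
  rw [Apoint, Matrix.mul_assoc, Matrix.mul_apply]
  have hBC : ∀ m : ZMod d, (Apoint0 d * (TW d u)ᴴ) m k
      = if m + k = u.2 then zeta d (-(u.1 * k) + (2:ZMod d)⁻¹ * u.1 * u.2) else 0 := by
    intro m
    rw [Matrix.mul_apply]
    have h1 : ∀ n : ZMod d, Apoint0 d m n * (TW d u)ᴴ n k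
        = if n = -m then (TW d u)ᴴ (-m) k else 0 := by
      intro n
      rw [Apoint0_apply d hodd hp]
      by_cases h : n = -m
      · subst h; rw [if_pos (by ring), one_mul, if_pos rfl]
      · rw [if_neg (fun hc => h (by linear_combination hc)), zero_mul, if_neg h]
    simp_rw [h1]
    rw [Finset.sum_ite_eq' Finset.univ (-m), if_pos (Finset.mem_univ _)]
    rw [Matrix.conjTranspose_apply, TW_apply]
    by_cases h : m + k = u.2
    · rw [if_pos (by linear_combination h), if_pos h, zeta_star]
      congr 1
      ring
    · rw [if_neg (fun hc => h (by linear_combination hc)), if_neg h, star_zero]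
  simp_rw [hBC, TW_apply]
  have h2 : ∀ m : ZMod d, (if j = m + u.2 then zeta d (u.1 * j - (2:ZMod d)⁻¹ * u.1 * u.2) else 0) *
      (if m + k = u.2 then zeta d (-(u.1 * k) + (2:ZMod d)⁻¹ * u.1 * u.2) else 0)
      = if m = j - u.2 then (if j + k = 2 * u.2 then zeta d (u.1 * j - (2:ZMod d)⁻¹ * u.1 * u.2) * zeta d (-(u.1 * k) + (2:ZMod d)⁻¹ * u.1 * u.2) else 0) else 0 := by
    intro m
    by_cases h : m = j - u.2
    · subst h
      rw [if_pos rfl, if_pos (by ring)]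
      by_cases h3 : j + k = 2 * u.2
      · rw [if_pos h3, if_pos (by linear_combination h3)]
      · rw [if_neg h3, if_neg (fun hc => h3 (by linear_combination hc)), mul_zero]
    · rw [if_neg (fun hc => h (by linear_combination -hc)), zero_mul, if_neg h]
  simp_rw [h2]
  rw [Finset.sum_ite_eq' Finset.univ (j - u.2), if_pos (Finset.mem_univ _)]
  by_cases h : j + k = 2 * u.2
  · rw [if_pos h, if_pos h, ← zeta_add]
    congr 1
    ring
  · rw [if_neg h, if_neg h]

lemma trace_Apoint_vecMulVec (hodd : Odd d) (hp : d.Prime) (w : ZMod d × ZMod d)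
    (v : ZMod d → ℂ) :
    (Apoint d w * Matrix.vecMulVec v (star v)).trace
      = ∑ j : ZMod d, zeta d (2 * w.1 * (j - w.2)) * (v (2 * w.2 - j) * star (v j)) := by
  rw [Matrix.trace]
  simp_rw [Matrix.diag_apply, Matrix.mul_apply, Matrix.vecMulVec_apply, Pi.star_apply]
  have h1 : ∀ j k : ZMod d, Apoint d w j k * (v k * star (v j))
      = if k = 2 * w.2 - j then zeta d (2 * w.1 * (j - w.2)) * (v (2 * w.2 - j) * star (v j)) else 0 := by
    intro j k
    rw [Apoint_apply d hodd hp]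
    by_cases h : k = 2 * w.2 - j
    · subst h
      rw [if_pos (by ring), if_pos rfl]
      congr 2
      ring
    · rw [if_neg (fun hc => h (by linear_combination hc)), zero_mul, if_neg h]
  simp_rw [h1]
  exact Finset.sum_congr rfl fun j _ => by
    rw [Finset.sum_ite_eq' Finset.univ (2 * w.2 - j), if_pos (Finset.mem_univ _)]

noncomputable def basisVec (m : ZMod d) : ZMod d → ℂ := fun j => if j = m then 1 else 0

noncomputable def quadVec (a t : ZMod d) : ZMod d → ℂ :=
  fun j => (((Real.sqrt d)⁻¹ : ℝ) : ℂ) * zeta d ((2 : ZMod d)⁻¹ * a * j ^ 2 + t * j)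

lemma basisVec_norm (m : ZMod d) : (∑ x : ZMod d, ‖basisVec d m x‖ ^ 2) = 1 := by
  simp only [basisVec]
  have : ∀ x : ZMod d, ‖if x = m then (1:ℂ) else 0‖ ^ 2 = if x = m then 1 else 0 := by
    intro x; split_ifs <;> simp
  simp_rw [this]
  rw [Finset.sum_ite_eq' Finset.univ m, if_pos (Finset.mem_univ _)]

lemma quadVec_norm (a t : ZMod d) : (∑ x : ZMod d, ‖quadVec d a t x‖ ^ 2) = 1 := by
  have hd0 : (0:ℝ) < d := by
    exact_mod_cast Nat.pos_of_ne_zero (NeZero.ne d)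
  have : ∀ x : ZMod d, ‖quadVec d a t x‖ ^ 2 = (d:ℝ)⁻¹ := by
    intro x
    have hz : ‖zeta d ((2 : ZMod d)⁻¹ * a * x ^ 2 + t * x)‖ = 1 := by
      rw [zeta_abs]
    simp only [quadVec, norm_mul, hz, mul_one, Complex.norm_real, Real.norm_eq_abs, abs_inv,
      _root_.abs_of_nonneg (Real.sqrt_nonneg _)]
    rw [inv_pow, Real.sq_sqrt hd0.le]
  simp_rw [this]
  rw [Finset.sum_const, Finset.card_univ, ZMod.card, nsmul_eq_mul]
  field_simp

lemma trace_basis (hodd : Odd d) (hp : d.Prime) (m : ZMod d) (w : ZMod d × ZMod d) :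
    (Apoint d w * Matrix.vecMulVec (basisVec d m) (star (basisVec d m))).trace
      = if w.2 = m then 1 else 0 := by
  haveI := Fact.mk hp
  have h2 : (2:ZMod d) ≠ 0 := two_ne_zero' d hodd hp
  rw [trace_Apoint_vecMulVec d hodd hp]
  have key : ∀ j : ZMod d, zeta d (2 * w.1 * (j - w.2)) *
      (basisVec d m (2 * w.2 - j) * star (basisVec d m j))
      = if j = m then (if w.2 = m then 1 else 0) else 0 := by
    intro j
    by_cases hj : j = m
    · subst hj
      by_cases hw : w.2 = j
      · have e1 : 2 * w.2 - j = j := by rw [hw]; ring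
        have e2 : 2 * w.1 * (j - w.2) = 0 := by rw [hw]; ring
        simp [basisVec, e1, e2, zeta_zero, hw, show (2:ZMod d) * j - j = j from by ring]
      · have e1 : ¬(2 * w.2 - j = j) := fun hc => hw (mul_left_cancel₀ h2 (by linear_combination hc))
        simp [basisVec, e1, hw]
    · simp [basisVec, hj]
  simp_rw [key]
  rw [Finset.sum_ite_eq' Finset.univ m, if_pos (Finset.mem_univ _)]

lemma trace_quad (hodd : Odd d) (hp : d.Prime) (a t : ZMod d) (w : ZMod d × ZMod d) :
    (Apoint d w * Matrix.vecMulVec (quadVec d a t) (star (quadVec d a t))).trace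
      = if w.1 = a * w.2 + t then 1 else 0 := by
  haveI := Fact.mk hp
  have h2 : (2:ZMod d) ≠ 0 := two_ne_zero' d hodd hp
  have hinv : (2:ZMod d)⁻¹ * 2 = 1 := inv_mul_cancel₀ h2
  have hd0 : (0:ℝ) < d := by exact_mod_cast Nat.pos_of_ne_zero (NeZero.ne d)
  rw [trace_Apoint_vecMulVec d hodd hp]
  have hc2 : (((Real.sqrt d)⁻¹ : ℝ) : ℂ) * (((Real.sqrt d)⁻¹ : ℝ) : ℂ) = (((d:ℝ)⁻¹ : ℝ) : ℂ) := by
    norm_cast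
    rw [← mul_inv, Real.mul_self_sqrt hd0.le]
  have key : ∀ j : ZMod d, zeta d (2 * w.1 * (j - w.2)) *
      (quadVec d a t (2 * w.2 - j) * star (quadVec d a t j))
      = (((d:ℝ)⁻¹ : ℝ) : ℂ) * zeta d ((2 * (w.1 - a * w.2 - t)) * (j - w.2)) := by
    intro j
    simp only [quadVec]
    rw [star_mul', Complex.star_def, Complex.conj_ofReal, zeta_conj]
    have : zeta d (2 * w.1 * (j - w.2)) *
        ((((Real.sqrt d)⁻¹ : ℝ) : ℂ) * zeta d ((2 : ZMod d)⁻¹ * a * (2 * w.2 - j) ^ 2 + t * (2 * w.2 - j)) *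
          ((((Real.sqrt d)⁻¹ : ℝ) : ℂ) * zeta d (-((2 : ZMod d)⁻¹ * a * j ^ 2 + t * j))))
        = ((((Real.sqrt d)⁻¹ : ℝ) : ℂ) * (((Real.sqrt d)⁻¹ : ℝ) : ℂ)) *
          (zeta d (2 * w.1 * (j - w.2)) * (zeta d ((2 : ZMod d)⁻¹ * a * (2 * w.2 - j) ^ 2 + t * (2 * w.2 - j)) *
            zeta d (-((2 : ZMod d)⁻¹ * a * j ^ 2 + t * j)))) := by ring
    rw [this, hc2, ← zeta_add, ← zeta_add]
    congr 2
    linear_combination (2 * a * w.2 ^ 2 - 2 * a * w.2 * j) * hinv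
  simp_rw [key]
  rw [← Finset.mul_sum]
  have hshift : ∑ j : ZMod d, zeta d ((2 * (w.1 - a * w.2 - t)) * (j - w.2))
      = ∑ x : ZMod d, zeta d ((2 * (w.1 - a * w.2 - t)) * x) :=
    Fintype.sum_bijective (fun j => j - w.2) (Equiv.subRight w.2).bijective _ _ (fun j => rfl)
  rw [hshift, char_sum d hp]
  have hiff : (2 * (w.1 - a * w.2 - t) = 0) ↔ (w.1 = a * w.2 + t) := by
    rw [mul_eq_zero]
    constructor
    · rintro (h | h)
      · exact absurd h h2
      · linear_combination h
    · intro h; right; linear_combination h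
  by_cases h : w.1 = a * w.2 + t
  · rw [if_pos (hiff.mpr h), if_pos h]
    rw [Complex.ofReal_inv, Complex.ofReal_natCast, inv_mul_cancel₀]
    exact_mod_cast Nat.cast_ne_zero.mpr (NeZero.ne d)
  · rw [if_neg (fun hc => h (hiff.mp hc)), if_neg h, mul_zero]

/-- Index type for the family: (slope or "vertical") × (nonzero offset). -/
abbrev Idx (d : ℕ) : Type := (ZMod d ⊕ Unit) × {δ : ZMod d // δ ≠ 0}

noncomputable def famVec (u : ZMod d × ZMod d) : Idx d → (ZMod d → ℂ) :=
  fun i => match i with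
  | (Sum.inl a, δ) => quadVec d a (u.1 - a * u.2 + δ.val)
  | (Sum.inr _, δ) => basisVec d (u.2 + δ.val)

noncomputable def fam (u : ZMod d × ZMod d) : Idx d → Matrix (ZMod d) (ZMod d) ℂ :=
  fun i => Matrix.vecMulVec (famVec d u i) (star (famVec d u i))

lemma fam_norm (u : ZMod d × ZMod d) (i : Idx d) :
    (∑ x : ZMod d, ‖famVec d u i x‖ ^ 2) = 1 := by
  rcases i with ⟨a | _, δ⟩
  · exact quadVec_norm d a _
  · exact basisVec_norm d _

lemma fam_trace (hodd : Odd d) (hp : d.Prime) (u : ZMod d × ZMod d) (i : Idx d)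
    (w : ZMod d × ZMod d) :
    (Apoint d w * fam d u i).trace
      = match i with
        | (Sum.inl a, δ) => if w.1 = a * w.2 + (u.1 - a * u.2 + δ.val) then 1 else 0
        | (Sum.inr _, δ) => if w.2 = u.2 + δ.val then 1 else 0 := by
  rcases i with ⟨a | _, δ⟩
  · exact trace_quad d hodd hp a _ w
  · exact trace_basis d hodd hp _ w

lemma sum_sub_helper (F : {δ : ZMod d // δ ≠ 0} → ℝ) (y : ZMod d) :
    (∑ δ : {δ : ZMod d // δ ≠ 0}, F δ * (if y = δ.val then 1 else 0))
      = if h : y = 0 then 0 else F ⟨y, h⟩ := by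
  by_cases h : y = 0
  · rw [dif_pos h]
    apply Finset.sum_eq_zero
    intro δ _
    rw [if_neg (by rw [h]; exact fun hc => δ.2 hc.symm), mul_zero]
  · rw [dif_neg h]
    rw [Finset.sum_eq_single ⟨y, h⟩]
    · rw [if_pos rfl, mul_one]
    · intro δ _ hne
      rw [if_neg (fun hc => hne (Subtype.ext hc.symm)), mul_zero]
    · intro habs; exact absurd (Finset.mem_univ _) habs

lemma fam_linearIndependent (hodd : Odd d) (hp : d.Prime) (u : ZMod d × ZMod d) :
    LinearIndependent ℝ (fam d u) := by
  haveI := Fact.mk hp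
  have hdR : (d : ℝ) ≠ 0 := Nat.cast_ne_zero.mpr (NeZero.ne d)
  rw [Fintype.linearIndependent_iff]
  intro g hg
  -- real-valued consequence of hg at each phase-space point
  have h0 : ∀ w : ZMod d × ZMod d,
      (∑ i : Idx d, g i * ((Apoint d w * fam d u i).trace).re) = 0 := by
    intro w
    have h1 : Apoint d w * (∑ i : Idx d, g i • fam d u i) = 0 := by
      rw [hg, Matrix.mul_zero]
    rw [Matrix.mul_sum] at h1
    simp_rw [mul_smul_comm] at h1
    have h2 := congrArg Matrix.trace h1
    rw [Matrix.trace_sum, Matrix.trace_zero] at h2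
    simp_rw [Matrix.trace_smul] at h2
    have h3 := congrArg Complex.re h2
    rw [Complex.re_sum, Complex.zero_re] at h3
    simpa [Complex.smul_re] using h3
  -- indicator reformulation
  have hind : ∀ x1 x2 : ZMod d,
      (∑ a : ZMod d, (∑ δ : {δ : ZMod d // δ ≠ 0}, g (Sum.inl a, δ) *
          (if x1 - a * x2 = δ.val then 1 else 0)))
        + (∑ δ : {δ : ZMod d // δ ≠ 0}, g (Sum.inr (), δ) *
          (if x2 = δ.val then 1 else 0)) = 0 := by
    intro x1 x2
    have h4 := h0 (u.1 + x1, u.2 + x2)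
    rw [Fintype.sum_prod_type, Fintype.sum_sum_type] at h4
    have e1 : ∀ (a : ZMod d) (δ : {δ : ZMod d // δ ≠ 0}),
        ((Apoint d (u.1 + x1, u.2 + x2) * fam d u (Sum.inl a, δ)).trace).re
          = (if x1 - a * x2 = δ.val then 1 else 0) := by
      intro a δ
      have ht := trace_quad d hodd hp a (u.1 - a * u.2 + δ.val) (u.1 + x1, u.2 + x2)
      rw [show fam d u (Sum.inl a, δ) = Matrix.vecMulVec (quadVec d a (u.1 - a * u.2 + δ.val))
          (star (quadVec d a (u.1 - a * u.2 + δ.val))) from rfl, ht]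
      by_cases hcond : x1 - a * x2 = δ.val
      · rw [if_pos (show u.1 + x1 = a * (u.2 + x2) + (u.1 - a * u.2 + δ.val) from by
          linear_combination hcond), if_pos hcond]
        simp
      · rw [if_neg (show ¬(u.1 + x1 = a * (u.2 + x2) + (u.1 - a * u.2 + δ.val)) from fun hcc =>
          hcond (by linear_combination hcc)), if_neg hcond]
        simp
    have e2 : ∀ (z : Unit) (δ : {δ : ZMod d // δ ≠ 0}),
        ((Apoint d (u.1 + x1, u.2 + x2) * fam d u (Sum.inr z, δ)).trace).re
          = (if x2 = δ.val then 1 else 0) := by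
      intro z δ
      have ht := trace_basis d hodd hp (u.2 + δ.val) (u.1 + x1, u.2 + x2)
      rw [show fam d u (Sum.inr z, δ) = Matrix.vecMulVec (basisVec d (u.2 + δ.val))
          (star (basisVec d (u.2 + δ.val))) from rfl, ht]
      by_cases hcond : x2 = δ.val
      · rw [if_pos (show u.2 + x2 = u.2 + δ.val from by linear_combination hcond), if_pos hcond]
        simp
      · rw [if_neg (show ¬(u.2 + x2 = u.2 + δ.val) from fun hcc =>
          hcond (by linear_combination hcc)), if_neg hcond]
        simp
    simp_rw [e1, e2] at h4
    simpa using h4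
  -- package into total functions
  set c : ZMod d → ZMod d → ℝ :=
    fun a y => if h : y = 0 then 0 else g (Sum.inl a, ⟨y, h⟩) with hc
  set e : ZMod d → ℝ := fun y => if h : y = 0 then 0 else g (Sum.inr (), ⟨y, h⟩) with he
  have master : ∀ x1 x2 : ZMod d, (∑ a : ZMod d, c a (x1 - a * x2)) + e x2 = 0 := by
    intro x1 x2
    have h5 := hind x1 x2
    rw [show (∑ a : ZMod d, (∑ δ : {δ : ZMod d // δ ≠ 0}, g (Sum.inl a, δ) *
          (if x1 - a * x2 = δ.val then 1 else 0))) = ∑ a : ZMod d, c a (x1 - a * x2) from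
        Finset.sum_congr rfl fun a _ => sum_sub_helper d (fun δ => g (Sum.inl a, δ)) _] at h5
    rw [sum_sub_helper d (fun δ => g (Sum.inr (), δ)) x2] at h5
    exact h5
  -- averaging along lines: c is constant in its second argument, hence zero
  have hc0 : ∀ a y, c a y = 0 := by
    have avg : ∀ a0 b0 : ZMod d, (d : ℝ) * c a0 b0
        + ((∑ a : ZMod d, ∑ b : ZMod d, c a b) - (∑ b : ZMod d, c a0 b))
        + (∑ y : ZMod d, e y) = 0 := by
      intro a0 b0
      have h6 : ∑ x2 : ZMod d, ((∑ a : ZMod d, c a ((a0 * x2 + b0) - a * x2)) + e x2) = 0 :=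
        Finset.sum_eq_zero fun x2 _ => master (a0 * x2 + b0) x2
      rw [Finset.sum_add_distrib, Finset.sum_comm] at h6
      have h7 : ∀ a : ZMod d, (∑ x2 : ZMod d, c a ((a0 * x2 + b0) - a * x2))
          = if a = a0 then (d : ℝ) * c a0 b0 else ∑ b : ZMod d, c a b := by
        intro a
        by_cases ha : a = a0
        · subst ha
          rw [if_pos rfl]
          have : ∀ x2 : ZMod d, (a * x2 + b0) - a * x2 = b0 := fun x2 => by ring
          simp_rw [this]
          rw [Finset.sum_const, Finset.card_univ, ZMod.card, nsmul_eq_mul]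
        · rw [if_neg ha]
          have hbij : Function.Bijective (fun x2 : ZMod d => (a0 * x2 + b0) - a * x2) := by
            have : (fun x2 : ZMod d => (a0 * x2 + b0) - a * x2)
                = fun x2 : ZMod d => (a0 - a) * x2 + b0 := by funext x2; ring
            rw [this]
            exact (Equiv.addRight b0).bijective.comp
              (mulLeft_bijective₀ (a0 - a) (sub_ne_zero.mpr (fun hc' => ha hc'.symm)))
          exact Fintype.sum_bijective _ hbij _ _ (fun x2 => rfl)
      simp_rw [h7] at h6
      have hsplit : ∀ x : ZMod d, (if x = a0 then (d:ℝ) * c a0 b0 else ∑ b : ZMod d, c x b)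
          = (∑ b : ZMod d, c x b)
            + (if x = a0 then (d:ℝ) * c a0 b0 - ∑ b : ZMod d, c a0 b else 0) := by
        intro x
        split_ifs with h
        · subst h; ring
        · ring
      simp_rw [hsplit] at h6
      rw [Finset.sum_add_distrib, Finset.sum_ite_eq' Finset.univ a0
        (fun _ => (d:ℝ) * c a0 b0 - ∑ b : ZMod d, c a0 b), if_pos (Finset.mem_univ _)] at h6
      linarith [h6]
    intro a y
    have hd0 : (0:ℝ) < d := by exact_mod_cast Nat.pos_of_ne_zero (NeZero.ne d)
    have h8 := avg a y
    have h9 := avg a 0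
    have hca0 : c a 0 = 0 := by rw [hc]; simp
    rw [hca0] at h9
    have : (d:ℝ) * c a y = (d:ℝ) * 0 := by linarith
    have := mul_left_cancel₀ (ne_of_gt hd0) this
    simpa using this
  have he0 : ∀ y, e y = 0 := by
    intro y
    have h10 := master 0 y
    simp_rw [hc0] at h10
    simpa using h10
  intro i
  rcases i with ⟨a | z, ⟨δ, hδ⟩⟩
  · have h11 := hc0 a δ
    rw [hc] at h11
    simp only [dif_neg hδ] at h11
    exact h11
  · cases z
    have h11 := he0 δ
    rw [he] at h11
    simp only [dif_neg hδ] at h11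
    exact h11

lemma card_Idx (hp : d.Prime) : Fintype.card (Idx d) = d ^ 2 - 1 := by
  have h1 : Fintype.card {δ : ZMod d // δ ≠ 0} = d - 1 := by
    rw [Fintype.card_subtype_compl, Fintype.card_subtype_eq, ZMod.card]
  rw [Fintype.card_prod, Fintype.card_sum, ZMod.card, Fintype.card_unit, h1]
  have hd1 : 1 ≤ d := Nat.one_le_iff_ne_zero.mpr (NeZero.ne d)
  obtain ⟨k, rfl⟩ : ∃ k, d = k + 1 := ⟨d - 1, by omega⟩
  have h2 : (k + 1) ^ 2 = k * k + 2 * k + 1 := by ring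
  have h3 : (k + 1 + 1) * (k + 1 - 1) = k * k + 2 * k := by
    simp only [Nat.add_sub_cancel]
    ring
  omega

end Facets

/-- The phase point operators define facets of the stabilizer polytope (odd prime `d`). -/
theorem phase_point_operators_are_facets (d : ℕ) [NeZero d] (hodd : Odd d) (hp : d.Prime)
    (u : ZMod d × ZMod d) :
    ∃ P : Fin (d ^ 2 - 1) → Matrix (ZMod d) (ZMod d) ℂ,
      (∀ i, ∃ v : ZMod d → ℂ, (∑ x : ZMod d, ‖v x‖ ^ 2) = 1 ∧
          P i = Matrix.vecMulVec v (star v)) ∧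
      (∀ i, ∀ w : ZMod d × ZMod d, 0 ≤ ((Apoint d w * P i).trace).re) ∧
      (∀ i, (Apoint d u * P i).trace = 0) ∧
      LinearIndependent ℝ P := by
  classical
  have hcard : Fintype.card (Fin (d ^ 2 - 1)) = Fintype.card (Facets.Idx d) := by
    rw [Fintype.card_fin, Facets.card_Idx d hp]
  let κ : Fin (d ^ 2 - 1) ≃ Facets.Idx d := Fintype.equivOfCardEq hcard
  refine ⟨fun i => Facets.fam d u (κ i), ?_, ?_, ?_, ?_⟩
  · intro i
    exact ⟨Facets.famVec d u (κ i), Facets.fam_norm d u (κ i), rfl⟩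
  · intro i w
    rw [Facets.fam_trace d hodd hp u (κ i) w]
    rcases κ i with ⟨a | z, δ⟩ <;> simp only [] <;> split_ifs <;> norm_num
  · intro i
    rw [Facets.fam_trace d hodd hp u (κ i) u]
    rcases κ i with ⟨a | z, δ⟩
    · simp only []
      rw [if_neg]
      intro hcc
      exact δ.2 (by linear_combination -hcc)
    · simp only []
      rw [if_neg]
      intro hcc
      exact δ.2 (by linear_combination -hcc)
  · exact (Facets.fam_linearIndependent d hodd hp u).comp κ κ.injective
end
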